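/- Given a marked partition (λ, a) of n, define integers b_i by b_i := a_i if a_i ≠ 0, and b_i := max({a_j + λ_i − λ_j : j < i} ∪ {a_j : j ≥ i}) if a_i = 0; set μ_i := b_i and ν_i := λ_i − b_i. Then (μ, ν) is a bi-partition of n (both μ and ν are weakly decreasing sequences of nonnegative integers with |μ| + |ν| = n), and the assignment (λ, a) ↦ (μ, ν) is a bijection from the set of marked partitions of n onto the set of bi-partitions of n. -/
import Mathlib


open scoped BigOperators

/-- A partition of `n`: a weakly decreasing sequence of nonnegative integers
(indexed by `ℕ`) with finite support and total sum `n`. -/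
def IsPartitionOf (n : ℕ) (l : ℕ → ℕ) : Prop :=
  Antitone l ∧ (Function.support l).Finite ∧ ∑ᶠ i, l i = n

/-- A marked partition `(λ, a)` of `n`. -/
def IsMarkedPartition (n : ℕ) (l a : ℕ → ℕ) : Prop :=
  IsPartitionOf n l ∧
  (∀ i, a i ≤ l i) ∧
  (∀ i, l (i + 1) = l i → a i = 0) ∧
  (∀ p q, p < q → a p ≠ 0 → a q ≠ 0 →
    a q < a p ∧ a p + l q < a q + l p)

/-- The sequence `b` of the theorem: `b i = a i` if `a i ≠ 0`, and otherwise
`b i = max ({a j + λ i − λ j : j < i} ∪ {a j : j ≥ i})` (computed in `ℤ`). -/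
noncomputable def bSeq (l a : ℕ → ℕ) (i : ℕ) : ℤ :=
  if a i ≠ 0 then (a i : ℤ)
  else sSup ({x : ℤ | ∃ j < i, x = (a j : ℤ) + (l i : ℤ) - (l j : ℤ)} ∪
             {x : ℤ | ∃ j, i ≤ j ∧ x = (a j : ℤ)})

/-- `μ_i := b_i`. -/
noncomputable def muSeq (l a : ℕ → ℕ) (i : ℕ) : ℕ := (bSeq l a i).toNat

/-- `ν_i := λ_i − b_i`. -/
noncomputable def nuSeq (l a : ℕ → ℕ) (i : ℕ) : ℕ := l i - muSeq l a i

/-- A bi-partition of `n`: a pair of partitions `(μ, ν)` with `|μ| + |ν| = n`. -/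
def IsBipartitionOf (n : ℕ) (p : (ℕ → ℕ) × (ℕ → ℕ)) : Prop :=
  Antitone p.1 ∧ (Function.support p.1).Finite ∧
  Antitone p.2 ∧ (Function.support p.2).Finite ∧
  (∑ᶠ i, p.1 i) + (∑ᶠ i, p.2 i) = n

namespace MPB

/-- Core (non-sum) conditions of a marked partition. -/
def Core (l a : ℕ → ℕ) : Prop :=
  Antitone l ∧ (∀ i, a i ≤ l i) ∧ (∀ i, l (i + 1) = l i → a i = 0) ∧
  (∀ p q, p < q → a p ≠ 0 → a q ≠ 0 → a q < a p ∧ a p + l q < a q + l p)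

/-- Uniform candidate function: `fc i j = a j - (l j - l i)⁺`. -/
def fc (l a : ℕ → ℕ) (i j : ℕ) : ℤ := (a j : ℤ) - max ((l j : ℤ) - (l i : ℤ)) 0

lemma fc_le_aj (l a : ℕ → ℕ) (i j : ℕ) : fc l a i j ≤ (a j : ℤ) := by
  have := le_max_right ((l j : ℤ) - (l i : ℤ)) 0
  simp only [fc]; linarith

lemma fc_le_sub (l a : ℕ → ℕ) (i j : ℕ) :
    fc l a i j ≤ (a j : ℤ) - ((l j : ℤ) - (l i : ℤ)) := by
  have := le_max_left ((l j : ℤ) - (l i : ℤ)) 0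
  simp only [fc]; linarith

lemma fc_eq_of_le {l : ℕ → ℕ} (a : ℕ → ℕ) {i j : ℕ} (h : l j ≤ l i) :
    fc l a i j = (a j : ℤ) := by
  have h' : (l j : ℤ) - (l i : ℤ) ≤ 0 := by
    have : (l j : ℤ) ≤ (l i : ℤ) := by exact_mod_cast h
    linarith
  simp only [fc, max_eq_right h', sub_zero]

lemma fc_eq_of_ge {l : ℕ → ℕ} (a : ℕ → ℕ) {i j : ℕ} (h : l i ≤ l j) :
    fc l a i j = (a j : ℤ) - (l j : ℤ) + (l i : ℤ) := by
  have h' : (0:ℤ) ≤ (l j : ℤ) - (l i : ℤ) := by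
    have : (l i : ℤ) ≤ (l j : ℤ) := by exact_mod_cast h
    linarith
  simp only [fc, max_eq_left h']; ring

lemma fc_mono {l a : ℕ → ℕ} {i i' : ℕ} (h : l i' ≤ l i) (j : ℕ) :
    fc l a i' j ≤ fc l a i j := by
  have h' : (l i' : ℤ) ≤ (l i : ℤ) := by exact_mod_cast h
  have : max ((l j : ℤ) - (l i : ℤ)) 0 ≤ max ((l j : ℤ) - (l i' : ℤ)) 0 :=
    max_le_max (by linarith) le_rfl
  simp only [fc]; linarith

lemma int_sSup_mem {s : Set ℤ} (h1 : s.Nonempty) (h2 : BddAbove s) : sSup s ∈ s := by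
  obtain ⟨b, hb⟩ := h2
  obtain ⟨g, hg, hub⟩ := Int.exists_greatest_of_bdd ⟨b, fun z hz => hb hz⟩ h1
  have hG : IsGreatest s g := ⟨hg, hub⟩
  rw [hG.csSup_eq]; exact hg

lemma bSpec {l a : ℕ → ℕ} (hc : Core l a) (i : ℕ) :
    (∀ j, fc l a i j ≤ bSeq l a i) ∧ ∃ j, bSeq l a i = fc l a i j := by
  obtain ⟨hl, hal, h3, h4⟩ := hc
  by_cases hai : a i = 0
  · have hrange : ({x : ℤ | ∃ j < i, x = (a j : ℤ) + (l i : ℤ) - (l j : ℤ)} ∪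
        {x : ℤ | ∃ j, i ≤ j ∧ x = (a j : ℤ)}) = Set.range (fc l a i) := by
      ext x
      constructor
      · rintro (⟨j, hj, rfl⟩ | ⟨j, hj, rfl⟩)
        · exact ⟨j, by rw [fc_eq_of_ge a (hl hj.le)]; ring⟩
        · exact ⟨j, by rw [fc_eq_of_le a (hl hj)]⟩
      · rintro ⟨j, rfl⟩
        rcases lt_or_ge j i with h | h
        · exact Or.inl ⟨j, h, by rw [fc_eq_of_ge a (hl h.le)]; ring⟩
        · exact Or.inr ⟨j, h, by rw [fc_eq_of_le a (hl h)]⟩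
    have hb : bSeq l a i = sSup (Set.range (fc l a i)) := by
      simp only [bSeq, if_neg (by simp [hai] : ¬a i ≠ 0)]
      rw [hrange]
    have hbdd : BddAbove (Set.range (fc l a i)) := by
      refine ⟨(l i : ℤ), ?_⟩
      rintro x ⟨j, rfl⟩
      have h1 : (a j : ℤ) ≤ (l j : ℤ) := by exact_mod_cast hal j
      rcases le_total (l j) (l i) with h | h
      · rw [fc_eq_of_le a h]
        have : (l j : ℤ) ≤ (l i : ℤ) := by exact_mod_cast h
        linarith
      · rw [fc_eq_of_ge a h]; linarith
    refine ⟨fun j => ?_, ?_⟩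
    · rw [hb]; exact le_csSup hbdd ⟨j, rfl⟩
    · rw [hb]
      obtain ⟨j, hj⟩ := int_sSup_mem (s := Set.range (fc l a i)) ⟨_, ⟨i, rfl⟩⟩ hbdd
      exact ⟨j, hj.symm⟩
  · have hb : bSeq l a i = (a i : ℤ) := by simp only [bSeq, if_pos hai]
    refine ⟨fun j => ?_, ⟨i, by rw [hb, fc_eq_of_le a le_rfl]⟩⟩
    rw [hb]
    rcases lt_trichotomy j i with h | h | h
    · by_cases haj : a j = 0
      · have h1 := fc_le_aj l a i j
        have : (0:ℤ) ≤ (a i : ℤ) := by positivity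
        rw [haj] at h1; push_cast at h1; linarith
      · have h2 := (h4 j i h haj hai).2
        have h2' : (a j : ℤ) + (l i : ℤ) < (a i : ℤ) + (l j : ℤ) := by exact_mod_cast h2
        have := fc_le_sub l a i j
        linarith
    · subst h; rw [fc_eq_of_le a le_rfl]
    · have h1 := fc_le_aj l a i j
      by_cases haj : a j = 0
      · have : (0:ℤ) ≤ (a i : ℤ) := by positivity
        rw [haj] at h1; push_cast at h1; linarith
      · have h2 : (a j : ℤ) < (a i : ℤ) := by exact_mod_cast (h4 i j h hai haj).1
        linarith

lemma b_nonneg {l a : ℕ → ℕ} (hc : Core l a) (i : ℕ) : 0 ≤ bSeq l a i := by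
  have h := (bSpec hc i).1 i
  rw [fc_eq_of_le a le_rfl] at h
  have : (0:ℤ) ≤ (a i : ℤ) := by positivity
  linarith

lemma b_le_l {l a : ℕ → ℕ} (hc : Core l a) (i : ℕ) : bSeq l a i ≤ (l i : ℤ) := by
  obtain ⟨j, hj⟩ := (bSpec hc i).2
  rw [hj]
  have h1 : (a j : ℤ) ≤ (l j : ℤ) := by exact_mod_cast hc.2.1 j
  rcases le_total (l j) (l i) with h | h
  · rw [fc_eq_of_le a h]
    have : (l j : ℤ) ≤ (l i : ℤ) := by exact_mod_cast h
    linarith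
  · rw [fc_eq_of_ge a h]; linarith

lemma mu_cast {l a : ℕ → ℕ} (hc : Core l a) (i : ℕ) :
    (muSeq l a i : ℤ) = bSeq l a i := Int.toNat_of_nonneg (b_nonneg hc i)

lemma mu_le_l {l a : ℕ → ℕ} (hc : Core l a) (i : ℕ) : muSeq l a i ≤ l i := by
  have h1 := mu_cast hc i
  have h2 := b_le_l hc i
  exact_mod_cast h1 ▸ h2

lemma nu_cast {l a : ℕ → ℕ} (hc : Core l a) (i : ℕ) :
    (nuSeq l a i : ℤ) = (l i : ℤ) - bSeq l a i := by
  have h1 := mu_cast hc i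
  have h2 := mu_le_l hc i
  simp only [nuSeq]
  push_cast [Nat.cast_sub h2]
  linarith

lemma b_succ_le {l a : ℕ → ℕ} (hc : Core l a) (i : ℕ) :
    bSeq l a (i + 1) ≤ bSeq l a i := by
  obtain ⟨j, hj⟩ := (bSpec hc (i + 1)).2
  rw [hj]
  exact le_trans (fc_mono (hc.1 (Nat.le_succ i)) j) ((bSpec hc i).1 j)

lemma nu_succ_key {l a : ℕ → ℕ} (hc : Core l a) (i : ℕ) :
    (l (i + 1) : ℤ) - bSeq l a (i + 1) ≤ (l i : ℤ) - bSeq l a i := by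
  obtain ⟨j, hj⟩ := (bSpec hc i).2
  have h1 : fc l a (i + 1) j ≤ bSeq l a (i + 1) := (bSpec hc (i + 1)).1 j
  have hle : l (i + 1) ≤ l i := hc.1 (Nat.le_succ i)
  have hle' : (l (i+1) : ℤ) ≤ (l i : ℤ) := by exact_mod_cast hle
  rw [hj]
  have key : (l (i + 1) : ℤ) - fc l a (i + 1) j ≤ (l i : ℤ) - fc l a i j := by
    rcases le_total (l j) (l (i + 1)) with h | h
    · rw [fc_eq_of_le a h, fc_eq_of_le a (le_trans h hle)]; linarith
    · rw [fc_eq_of_ge a h]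
      rcases le_total (l j) (l i) with h' | h'
      · rw [fc_eq_of_le a h']
        have : (l (i+1) : ℤ) ≤ (l j : ℤ) := by exact_mod_cast h
        linarith
      · rw [fc_eq_of_ge a h']; linarith
  linarith

/-- If `a i ≠ 0` then `b` strictly drops at `i`. -/
lemma b_succ_lt {l a : ℕ → ℕ} (hc : Core l a) {i : ℕ} (hai : a i ≠ 0) :
    bSeq l a (i + 1) < bSeq l a i := by
  obtain ⟨hl, hal, h3, h4⟩ := hc
  have hb : bSeq l a i = (a i : ℤ) := by simp only [bSeq, if_pos hai]
  obtain ⟨j, hj⟩ := (bSpec ⟨hl, hal, h3, h4⟩ (i + 1)).2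
  rw [hb, hj]
  have hpos : (0:ℤ) < (a i : ℤ) := by exact_mod_cast Nat.pos_of_ne_zero hai
  have hlt : l (i + 1) < l i :=
    lt_of_le_of_ne (hl (Nat.le_succ i)) (fun h => hai (h3 i h))
  have hlt' : (l (i+1) : ℤ) < (l i : ℤ) := by exact_mod_cast hlt
  rcases lt_trichotomy j i with h | h | h
  · by_cases haj : a j = 0
    · have h1 := fc_le_aj l a (i + 1) j
      rw [haj] at h1; push_cast at h1; linarith
    · have h2 : (a j : ℤ) + (l i : ℤ) < (a i : ℤ) + (l j : ℤ) := by
        exact_mod_cast (h4 j i h haj hai).2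
      have := fc_le_sub l a (i + 1) j
      linarith
  · rw [h]
    have := fc_le_sub l a (i + 1) i
    linarith
  · have h1 := fc_le_aj l a (i + 1) j
    by_cases haj : a j = 0
    · rw [haj] at h1; push_cast at h1; linarith
    · have h2 : (a j : ℤ) < (a i : ℤ) := by exact_mod_cast (h4 i j h hai haj).1
      linarith

/-- If `b` drops at `j` then `l j ≠ l (j+1)` is forced. -/
lemma l_succ_lt_of_b_drop {l a : ℕ → ℕ} (hc : Core l a) {j : ℕ}
    (hd : bSeq l a (j + 1) < bSeq l a j) : l (j + 1) < l j := by
  rcases lt_or_eq_of_le (hc.1 (Nat.le_succ j)) with h | h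
  · exact h
  · exfalso
    obtain ⟨k, hk⟩ := (bSpec hc j).2
    have : fc l a j k = fc l a (j + 1) k := by simp only [fc, h]
    have h1 : bSeq l a j ≤ bSeq l a (j + 1) := by
      rw [hk, this]; exact (bSpec hc (j + 1)).1 k
    linarith

/-- Marked index: all earlier b-drops `j` have `ν j > ν i`. -/
lemma mark_nu_lt {l a : ℕ → ℕ} (hc : Core l a) {i : ℕ} (hai : a i ≠ 0)
    {j : ℕ} (hji : j < i) (hd : bSeq l a (j + 1) < bSeq l a j) :
    (l i : ℤ) - bSeq l a i < (l j : ℤ) - bSeq l a j := by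
  obtain ⟨hl, hal, h3, h4⟩ := hc
  have hc' : Core l a := ⟨hl, hal, h3, h4⟩
  have hbi : bSeq l a i = (a i : ℤ) := by simp only [bSeq, if_pos hai]
  have hpos : (0:ℤ) < (a i : ℤ) := by exact_mod_cast Nat.pos_of_ne_zero hai
  -- l i < l j
  have hlji : l i < l j := by
    rcases lt_or_eq_of_le (hl hji.le) with h | h
    · exact h
    · exfalso
      have h1 : l (j + 1) = l j := le_antisymm (hl (Nat.le_succ j))
        (by rw [← h]; exact hl hji)
      exact absurd (l_succ_lt_of_b_drop hc' hd) (by omega)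
  have hlji' : (l i : ℤ) < (l j : ℤ) := by exact_mod_cast hlji
  obtain ⟨k, hk⟩ := (bSpec hc' j).2
  have hbj_ge : (a i : ℤ) ≤ bSeq l a j := by
    have := (bSpec hc' j).1 i
    rw [fc_eq_of_le a hlji.le] at this; exact this
  have hak : a k ≠ 0 := by
    intro h0
    have h1 := fc_le_aj l a j k
    rw [h0] at h1; push_cast at h1
    rw [hk] at hbj_ge; linarith
  rw [hk, hbi]
  -- goal: l i - a i < l j - fc l a j k
  rcases lt_trichotomy k i with h | h | h
  · have h2 : (a k : ℤ) + (l i : ℤ) < (a i : ℤ) + (l k : ℤ) := by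
      exact_mod_cast (h4 k i h hak hai).2
    have := fc_le_sub l a j k
    linarith
  · subst h
    rw [fc_eq_of_le a hlji.le]; linarith
  · have h2 : (a k : ℤ) < (a i : ℤ) := by exact_mod_cast (h4 i k h hai hak).1
    have h1 := fc_le_aj l a j k
    linarith

/-- Unmarked index with a b-drop: an earlier b-drop has `ν j ≤ ν i`. -/
lemma unmark {l a : ℕ → ℕ} (hc : Core l a) {i : ℕ} (hai : a i = 0)
    (hd : bSeq l a (i + 1) < bSeq l a i) :
    ∃ j < i, bSeq l a (j + 1) < bSeq l a j ∧
      (l j : ℤ) - bSeq l a j ≤ (l i : ℤ) - bSeq l a i := by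
  obtain ⟨k, hk⟩ := (bSpec hc i).2
  have hbpos : 0 < bSeq l a i := lt_of_le_of_lt (b_nonneg hc (i + 1)) hd
  have hak : a k ≠ 0 := by
    intro h0
    have h1 := fc_le_aj l a i k
    rw [h0] at h1; push_cast at h1; rw [hk] at hbpos; linarith
  have hki : k < i := by
    rcases lt_trichotomy k i with h | h | h
    · exact h
    · exact absurd (h ▸ hai) hak
    · exfalso
      have hlk : l k ≤ l (i + 1) := hc.1 h
      have h1 : fc l a (i + 1) k = (a k : ℤ) := fc_eq_of_le a hlk
      have h2 : fc l a i k = (a k : ℤ) := fc_eq_of_le a (hc.1 h.le)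
      have := (bSpec hc (i + 1)).1 k
      rw [h1] at this; rw [hk, h2] at hd; linarith
  have hbk : bSeq l a k = (a k : ℤ) := by simp only [bSeq, if_pos hak]
  refine ⟨k, hki, b_succ_lt hc hak, ?_⟩
  rw [hbk, hk, fc_eq_of_ge a (hc.1 hki.le)]
  linarith

/-- The recovery rule: `i` is marked iff `μ` drops at `i` and every earlier
`μ`-drop `j` has `ν j > ν i`. -/
def Rule (μ ν : ℕ → ℕ) (i : ℕ) : Prop :=
  μ (i + 1) < μ i ∧ ∀ j < i, μ (j + 1) < μ j → ν i < ν j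

lemma mark_iff {l a : ℕ → ℕ} (hc : Core l a) (i : ℕ) :
    a i ≠ 0 ↔ Rule (muSeq l a) (nuSeq l a) i := by
  have hmu := mu_cast hc
  have hnu := nu_cast hc
  constructor
  · intro hai
    have hbi : bSeq l a i = (a i : ℤ) := by simp only [bSeq, if_pos hai]
    constructor
    · have h := b_succ_lt hc hai
      have h1 := hmu (i + 1); have h2 := hmu i; omega
    · intro j hj hdm
      have hd : bSeq l a (j + 1) < bSeq l a j := by
        have h1 := hmu (j + 1); have h2 := hmu j; omega
      have := mark_nu_lt hc hai hj hd
      have h1 := hnu i; have h2 := hnu j; omega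
  · rintro ⟨h1, h2⟩
    intro hai0
    have hai : a i = 0 := hai0
    have hd : bSeq l a (i + 1) < bSeq l a i := by
      have ha := hmu (i + 1); have hb := hmu i; omega
    obtain ⟨j, hj, hdj, hle⟩ := unmark hc hai hd
    have hdm : muSeq l a (j + 1) < muSeq l a j := by
      have ha := hmu (j + 1); have hb := hmu j; omega
    have := h2 j hj hdm
    have ha := hnu i; have hb := hnu j; omega

lemma a_val {l a : ℕ → ℕ} (hc : Core l a) {i : ℕ} (hai : a i ≠ 0) :
    a i = muSeq l a i := by
  have hbi : bSeq l a i = (a i : ℤ) := by simp only [bSeq, if_pos hai]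
  have := mu_cast hc i
  omega

lemma core_of_marked {n : ℕ} {l a : ℕ → ℕ} (h : IsMarkedPartition n l a) :
    Core l a := ⟨h.1.1, h.2.1, h.2.2.1, h.2.2.2⟩

lemma mu_add_nu {l a : ℕ → ℕ} (hc : Core l a) (i : ℕ) :
    muSeq l a i + nuSeq l a i = l i := by
  have := mu_le_l hc i; simp only [nuSeq]; omega

lemma mapsTo {n : ℕ} {l a : ℕ → ℕ} (h : IsMarkedPartition n l a) :
    IsBipartitionOf n (muSeq l a, nuSeq l a) := by
  have hc := core_of_marked h
  obtain ⟨⟨hl, hfin, hsum⟩, -⟩ := h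
  have hμa : Antitone (muSeq l a) := antitone_nat_of_succ_le fun i => by
    have := b_succ_le hc i
    have h1 := mu_cast hc i; have h2 := mu_cast hc (i+1); omega
  have hνa : Antitone (nuSeq l a) := antitone_nat_of_succ_le fun i => by
    have := nu_succ_key hc i
    have h1 := nu_cast hc i; have h2 := nu_cast hc (i+1); omega
  have hμs : Function.support (muSeq l a) ⊆ Function.support l := fun i hi => by
    simp only [Function.mem_support] at *
    have := mu_le_l hc i; omega
  have hνs : Function.support (nuSeq l a) ⊆ Function.support l := fun i hi => by
    simp only [Function.mem_support] at *
    have := mu_add_nu hc i; omega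
  refine ⟨hμa, hfin.subset hμs, hνa, hfin.subset hνs, ?_⟩
  rw [← finsum_add_distrib (hfin.subset hμs) (hfin.subset hνs), ← hsum]
  exact finsum_congr (mu_add_nu hc)

lemma exists_drop {μ : ℕ → ℕ} (hμf : (Function.support μ).Finite)
    (hμa : Antitone μ) {i : ℕ} (hi : μ i ≠ 0) :
    ∃ j, i ≤ j ∧ μ (j + 1) < μ j := by
  by_contra h
  push_neg at h
  have hconst : ∀ m, μ (i + m) = μ i := by
    intro m
    induction m with
    | zero => rfl
    | succ m ih =>
      have h1 := h (i + m) (Nat.le_add_right _ _)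
      have h2 : μ (i + m + 1) ≤ μ (i + m) := hμa (by omega)
      show μ (i + m + 1) = μ i
      omega
  have hsub : Set.Ici i ⊆ Function.support μ := by
    intro j hj
    have hj' : i ≤ j := hj
    have : j = i + (j - i) := by omega
    rw [Function.mem_support, this, hconst]; exact hi
  exact (Set.Ici_infinite i) (hμf.subset hsub)

/-- Inverse construction: the partition. -/
def mkL (μ ν : ℕ → ℕ) (i : ℕ) : ℕ := μ i + ν i

open Classical in
/-- Inverse construction: the marking. -/
noncomputable def mkA (μ ν : ℕ → ℕ) (i : ℕ) : ℕ :=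
  if Rule μ ν i then μ i else 0

lemma mkA_of_rule {μ ν : ℕ → ℕ} {i : ℕ} (h : Rule μ ν i) : mkA μ ν i = μ i := by
  simp [mkA, h]

lemma mkA_of_not_rule {μ ν : ℕ → ℕ} {i : ℕ} (h : ¬ Rule μ ν i) : mkA μ ν i = 0 := by
  simp [mkA, h]

lemma rule_of_mkA_ne {μ ν : ℕ → ℕ} {i : ℕ} (h : mkA μ ν i ≠ 0) : Rule μ ν i := by
  by_contra hr; exact h (mkA_of_not_rule hr)

lemma core_mk {μ ν : ℕ → ℕ} (hμa : Antitone μ) (hνa : Antitone ν) :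
    Core (mkL μ ν) (mkA μ ν) := by
  refine ⟨fun i j h => add_le_add (hμa h) (hνa h), fun i => ?_, fun i h => ?_, ?_⟩
  · by_cases hr : Rule μ ν i
    · rw [mkA_of_rule hr]; exact Nat.le_add_right _ _
    · rw [mkA_of_not_rule hr]; exact Nat.zero_le _
  · refine mkA_of_not_rule fun hr => ?_
    have h1 := hr.1
    have h2 : ν (i + 1) ≤ ν i := hνa (by omega)
    simp only [mkL] at h
    omega
  · intro p q hpq hap haq
    have hrp := rule_of_mkA_ne hap
    have hrq := rule_of_mkA_ne haq
    have hνlt : ν q < ν p := hrq.2 p hpq hrp.1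
    have hμlt : μ q < μ p := lt_of_le_of_lt (hμa (Nat.succ_le_of_lt hpq)) hrp.1
    rw [mkA_of_rule hrp, mkA_of_rule hrq]
    simp only [mkL]
    omega

lemma b_mk_eq {μ ν : ℕ → ℕ} (hμa : Antitone μ) (hμf : (Function.support μ).Finite)
    (hνa : Antitone ν) (i : ℕ) : bSeq (mkL μ ν) (mkA μ ν) i = (μ i : ℤ) := by
  classical
  have hc := core_mk hμa hνa
  refine le_antisymm ?_ ?_
  · obtain ⟨j, hj⟩ := (bSpec hc i).2
    rw [hj]
    by_cases haj : mkA μ ν j = 0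
    · have h1 := fc_le_aj (mkL μ ν) (mkA μ ν) i j
      rw [haj] at h1; push_cast at h1
      have : (0:ℤ) ≤ (μ i : ℤ) := by positivity
      linarith
    · have hr := rule_of_mkA_ne haj
      have hv := mkA_of_rule hr
      rcases le_total j i with h | h
      · have h1 := fc_le_sub (mkL μ ν) (mkA μ ν) i j
        have hν : ν i ≤ ν j := hνa h
        have hν' : (ν i : ℤ) ≤ (ν j : ℤ) := by exact_mod_cast hν
        rw [hv] at h1
        simp only [mkL] at h1
        push_cast at h1
        linarith
      · have h1 := fc_le_aj (mkL μ ν) (mkA μ ν) i j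
        rw [hv] at h1
        have hμle : (μ j : ℤ) ≤ (μ i : ℤ) := by exact_mod_cast hμa h
        linarith
  · by_cases hi : μ i = 0
    · rw [hi]; push_cast; exact b_nonneg hc i
    · -- find a witness
      obtain ⟨k, hk⟩ : ∃ j, i ≤ j ∧ μ (j + 1) < μ j := exists_drop hμf hμa hi
      set P : ℕ → Prop := fun j => i ≤ j ∧ μ (j + 1) < μ j with hP
      have hex : ∃ j, P j := ⟨k, hk⟩
      set k0 := Nat.find hex with hk0
      have hk0spec : i ≤ k0 ∧ μ (k0 + 1) < μ k0 := Nat.find_spec hex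
      have hk0min : ∀ m, m < k0 → ¬ P m := fun m hm => Nat.find_min hex hm
      have hconst : ∀ t, i ≤ t → t ≤ k0 → μ t = μ i := by
        intro t
        induction t with
        | zero =>
          intro h1 h2
          have : i = 0 := by omega
          rw [this]
        | succ t ih =>
          intro h1 h2
          rcases Nat.lt_or_ge i (t + 1) with h' | h'
          · have hti : i ≤ t := by omega
            have htk : t < k0 := by omega
            have hnd := hk0min t htk
            simp only [hP, not_and, not_lt] at hnd
            have h3 := hnd hti
            have h4 : μ (t + 1) ≤ μ t := hμa (by omega)
            have h5 := ih hti (by omega)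
            show μ (t + 1) = μ i
            omega
          · have : i = t + 1 := by omega
            rw [this]
      by_cases hrk : Rule μ ν k0
      · have h1 := (bSpec hc i).1 k0
        have hlk : mkL μ ν k0 ≤ mkL μ ν i := hc.1 hk0spec.1
        rw [fc_eq_of_le _ hlk, mkA_of_rule hrk] at h1
        have h2 := hconst k0 hk0spec.1 le_rfl
        rw [h2] at h1; exact h1
      · have hQex : ∃ j, μ (j + 1) < μ j ∧ ν j ≤ ν k0 := by
          simp only [Rule, not_and, not_forall, not_lt] at hrk
          obtain ⟨j, hj1, hj2, hj3⟩ := hrk hk0spec.2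
          exact ⟨j, hj2, hj3⟩
        set j1 := Nat.find hQex with hj1def
        have hj1spec : μ (j1 + 1) < μ j1 ∧ ν j1 ≤ ν k0 := Nat.find_spec hQex
        have hj1min : ∀ m, m < j1 → ¬ (μ (m + 1) < μ m ∧ ν m ≤ ν k0) :=
          fun m hm => Nat.find_min hQex hm
        have hj1k0 : j1 ≤ k0 := Nat.find_min' hQex ⟨hk0spec.2, le_rfl⟩
        have hj1i : j1 < i := by
          rcases Nat.lt_or_ge j1 i with h | h
          · exact h
          · exfalso
            rcases Nat.lt_or_ge j1 k0 with h' | h'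
            · exact hk0min j1 h' ⟨h, hj1spec.1⟩
            · have : j1 = k0 := by omega
              refine hrk ⟨hk0spec.2, fun j hj hdj => ?_⟩
              have := hj1min j (by omega)
              simp only [not_and, not_le] at this
              exact this hdj
        have hνik : ν k0 ≤ ν i := hνa hk0spec.1
        have hνji : ν i ≤ ν j1 := hνa hj1i.le
        have hνeq : ν j1 = ν i := by omega
        have h1 := (bSpec hc i).1 j1
        have hlk : mkL μ ν i ≤ mkL μ ν j1 := hc.1 hj1i.le
        have hrj1 : Rule μ ν j1 := by
          refine ⟨hj1spec.1, fun j hj hdj => ?_⟩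
          have := hj1min j hj
          simp only [not_and, not_le] at this
          have := this hdj
          omega
        rw [fc_eq_of_ge _ hlk, mkA_of_rule hrj1] at h1
        simp only [mkL] at h1
        push_cast at h1
        omega

lemma muSeq_mk {μ ν : ℕ → ℕ} (hμa : Antitone μ) (hμf : (Function.support μ).Finite)
    (hνa : Antitone ν) : muSeq (mkL μ ν) (mkA μ ν) = μ := by
  funext i
  have := b_mk_eq hμa hμf hνa i
  simp only [muSeq]
  omega

lemma nuSeq_mk {μ ν : ℕ → ℕ} (hμa : Antitone μ) (hμf : (Function.support μ).Finite)
    (hνa : Antitone ν) : nuSeq (mkL μ ν) (mkA μ ν) = ν := by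
  funext i
  simp only [nuSeq, muSeq_mk hμa hμf hνa, mkL]
  omega

end MPB

/-- The assignment `(λ, a) ↦ (μ, ν)` maps marked partitions of `n` to
bi-partitions of `n`, and is a bijection between these two sets. -/
theorem markedPartition_to_bipartition_bijOn (n : ℕ) :
    Set.BijOn (fun p : (ℕ → ℕ) × (ℕ → ℕ) => (muSeq p.1 p.2, nuSeq p.1 p.2))
      {p | IsMarkedPartition n p.1 p.2} {q | IsBipartitionOf n q} := by
  refine ⟨?_, ?_, ?_⟩
  · rintro ⟨l, a⟩ h
    exact MPB.mapsTo h
  · rintro ⟨l1, a1⟩ h1 ⟨l2, a2⟩ h2 heq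
    simp only [Set.mem_setOf_eq] at h1 h2
    have hc1 := MPB.core_of_marked h1
    have hc2 := MPB.core_of_marked h2
    simp only [Prod.mk.injEq] at heq
    obtain ⟨hμ, hν⟩ := heq
    have hl : l1 = l2 := by
      funext i
      have e1 := MPB.mu_add_nu hc1 i
      have e2 := MPB.mu_add_nu hc2 i
      rw [← e1, ← e2, hμ, hν]
    have ha : a1 = a2 := by
      funext i
      by_cases hr : MPB.Rule (muSeq l1 a1) (nuSeq l1 a1) i
      · have hr2 : MPB.Rule (muSeq l2 a2) (nuSeq l2 a2) i := by
          rw [← hμ, ← hν]; exact hr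
        have hne1 := (MPB.mark_iff hc1 i).mpr hr
        have hne2 := (MPB.mark_iff hc2 i).mpr hr2
        rw [MPB.a_val hc1 hne1, MPB.a_val hc2 hne2, hμ]
      · have hr2 : ¬ MPB.Rule (muSeq l2 a2) (nuSeq l2 a2) i := by
          rw [← hμ, ← hν]; exact hr
        have hz1 : a1 i = 0 := by
          by_contra h; exact hr ((MPB.mark_iff hc1 i).mp h)
        have hz2 : a2 i = 0 := by
          by_contra h; exact hr2 ((MPB.mark_iff hc2 i).mp h)
        rw [hz1, hz2]
    rw [Prod.mk.injEq]
    exact ⟨hl, ha⟩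
  · rintro ⟨μ, ν⟩ hq
    obtain ⟨hμa, hμf, hνa, hνf, hsum⟩ := hq
    have hμa : Antitone μ := hμa
    have hνa : Antitone ν := hνa
    refine ⟨(MPB.mkL μ ν, MPB.mkA μ ν), ?_, ?_⟩
    · have hcore := MPB.core_mk hμa hνa
      refine ⟨⟨hcore.1, ?_, ?_⟩, hcore.2.1, hcore.2.2.1, hcore.2.2.2⟩
      · refine (hμf.union hνf).subset fun i hi => ?_
        simp only [Function.mem_support, MPB.mkL] at hi
        simp only [Set.mem_union, Function.mem_support]
        omega
      · rw [show (∑ᶠ i, MPB.mkL μ ν i) = ∑ᶠ i, (μ i + ν i) from rfl,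
          finsum_add_distrib hμf hνf]
        exact hsum
    · simp only [Prod.mk.injEq]
      exact ⟨MPB.muSeq_mk hμa hμf hνa, MPB.nuSeq_mk hμa hμf hνa⟩
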